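/- Let G = (V,E) be a chordal graph and G' = (V,E') a chordal subgraph of G with |E \ E'| = k. Then there exists an increasing sequence of chordal graphs G' = G₀ ⊂ G₁ ⊂ ⋯ ⊂ G_{k−1} ⊂ G_k = G on vertex set V, where consecutive graphs differ by exactly one edge. -/

import Mathlib

/-- A graph is chordal (decomposable) if every cycle of length at least four has a
chord. -/
def IsChordal {V : Type*} (G : SimpleGraph V) : Prop :=
  ∀ ⦃v : V⦄ (c : G.Walk v v), c.IsCycle → 4 ≤ c.length →
    ∃ u w : V, G.Adj u w ∧ u ∈ c.support ∧ w ∈ c.support ∧ s(u, w) ∉ c.edges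

namespace ChordalAux

open SimpleGraph Walk

variable {V : Type*}

/-- The induced subgraph on `s`, as a graph on the same vertex set. -/
def restrict (G : SimpleGraph V) (s : Set V) : SimpleGraph V where
  Adj x y := x ∈ s ∧ y ∈ s ∧ G.Adj x y
  symm := ⟨fun x y ⟨hx, hy, h⟩ => ⟨hy, hx, h.symm⟩⟩
  loopless := ⟨fun x ⟨_, _, h⟩ => G.loopless.irrefl x h⟩

lemma restrict_adj {G : SimpleGraph V} {s : Set V} {x y : V} :
    (restrict G s).Adj x y ↔ x ∈ s ∧ y ∈ s ∧ G.Adj x y := Iff.rfl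

lemma restrict_le (G : SimpleGraph V) (s : Set V) : restrict G s ≤ G :=
  fun _ _ h => h.2.2

lemma restrict_mono (G : SimpleGraph V) {s t : Set V} (h : s ⊆ t) :
    restrict G s ≤ restrict G t := fun _ _ ⟨hx, hy, ha⟩ => ⟨h hx, h hy, ha⟩

/-- Every vertex on a non-nil walk has a neighbor. -/
lemma exists_adj_of_mem_support {G : SimpleGraph V} {a b : V} (p : G.Walk a b)
    (hp : ¬ p.Nil) {z : V} (hz : z ∈ p.support) : ∃ w, G.Adj z w := by
  induction p with
  | nil => exact absurd Walk.nil_nil hp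
  | @cons u v w h q ih =>
    rcases List.mem_cons.mp hz with rfl | hz
    · exact ⟨v, h⟩
    · cases q with
      | nil =>
        simp only [Walk.support_nil, List.mem_singleton] at hz
        subst hz
        exact ⟨u, h.symm⟩
      | cons h' q' =>
        exact ih Walk.not_nil_cons hz

/-- Support of a non-nil walk in a restricted graph lies in `s`. -/
lemma mem_of_support_restrict {G : SimpleGraph V} {s : Set V} {a b : V}
    (p : (restrict G s).Walk a b) (hp : ¬ p.Nil) {z : V} (hz : z ∈ p.support) : z ∈ s := by
  obtain ⟨w, hw⟩ := exists_adj_of_mem_support p hp hz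
  exact hw.1

/-- A restriction of a chordal graph is chordal. -/
lemma isChordal_restrict {G : SimpleGraph V} (hG : IsChordal G) (s : Set V) :
    IsChordal (restrict G s) := by
  intro v c hc hlen
  have hn : ¬ c.Nil := hc.not_nil
  have hsub : ∀ e ∈ c.edges, e ∈ G.edgeSet := fun e he =>
    SimpleGraph.edgeSet_mono (restrict_le G s) (Walk.edges_subset_edgeSet c he)
  obtain ⟨u, w, hadj, hu, hw, hnot⟩ :=
    hG (c.transfer G hsub) (hc.transfer hsub)
      (by rwa [Walk.length_transfer])
  rw [Walk.support_transfer] at hu hw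
  rw [Walk.edges_transfer] at hnot
  exact ⟨u, w, ⟨mem_of_support_restrict c hn hu, mem_of_support_restrict c hn hw, hadj⟩,
    hu, hw, hnot⟩

lemma support_get_eq_getVert {G : SimpleGraph V} {a b : V} (p : G.Walk a b) (i : ℕ)
    (h : i < p.support.length) : p.support.get ⟨i, h⟩ = p.getVert i := by
  induction p generalizing i with
  | nil => simp only [Walk.support_nil, List.length_singleton] at h; interval_cases i <;> simp [Walk.getVert]
  | @cons u v w hadj q ih =>
    cases i with
    | zero => simp [Walk.getVert_zero]
    | succ i =>
      rw [Walk.getVert_cons_succ]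
      have h' : i < q.support.length := by
        simpa [Walk.support_cons] using h
      rw [← ih i h']
      simp [Walk.support_cons]

lemma getVert_inj {G : SimpleGraph V} {a b : V} (p : G.Walk a b) (hnd : p.support.Nodup)
    {i j : ℕ} (hi : i ≤ p.length) (hj : j ≤ p.length) (h : p.getVert i = p.getVert j) :
    i = j := by
  have hi' : i < p.support.length := by rw [Walk.length_support]; omega
  have hj' : j < p.support.length := by rw [Walk.length_support]; omega
  rw [← support_get_eq_getVert p i hi', ← support_get_eq_getVert p j hj'] at h
  exact Fin.mk.inj_iff.mp ((List.Nodup.get_inj_iff hnd).mp h)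

lemma eq_getVert_one_of_mem_edges {G : SimpleGraph V} {a b z : V} (p : G.Walk a b)
    (hnd : p.support.Nodup) (he : s(a, z) ∈ p.edges) : z = p.getVert 1 := by
  cases p with
  | nil => simp at he
  | @cons u v w hadj q =>
    rw [Walk.edges_cons, List.mem_cons] at he
    rcases he with he | he
    · rw [Sym2.congr_right.mp he, Walk.getVert_cons_succ, Walk.getVert_zero]
    · exfalso
      have hmem := Walk.fst_mem_support_of_mem_edges q he
      rw [Walk.support_cons, List.nodup_cons] at hnd
      exact hnd.1 hmem


lemma length_rotate [DecidableEq V] {G : SimpleGraph V} {v u : V} (c : G.Walk v v) (h : u ∈ c.support) :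
    (c.rotate u h).length = c.length := by
  have h2 := congrArg Walk.length (c.take_spec h)
  rw [Walk.length_append] at h2
  simp only [Walk.rotate, Walk.length_append]
  omega

/-- In a cycle of length at least 4, no three distinct vertices are pairwise
joined by edges of the cycle. -/
lemma not_triangle_base {G : SimpleGraph V} {a b c : V} (w' : G.Walk a a)
    (hcyc : w'.IsCycle) (hlen' : 4 ≤ w'.length) (hab : a ≠ b) (hac : a ≠ c) (hbc : b ≠ c)
    (h1' : s(a, b) ∈ w'.edges) (h2' : s(a, c) ∈ w'.edges) (h3' : s(b, c) ∈ w'.edges) :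
    False := by
  cases w' with
  | nil => exact hcyc.ne_nil rfl
  | @cons u v _ hadj q =>
    rw [Walk.cons_isCycle_iff] at hcyc
    obtain ⟨hq, hfirst⟩ := hcyc
    have hqnd : q.support.Nodup := hq.support_nodup
    have hqrnd : q.reverse.support.Nodup := by
      rw [Walk.support_reverse, List.nodup_reverse]; exact hqnd
    have hqlen : 3 ≤ q.length := by
      simpa [Walk.length_cons] using hlen'
    -- the two cycle-neighbours of `a`
    have key : ∀ z, s(a, z) ∈ (Walk.cons hadj q).edges → z = v ∨ z = q.reverse.getVert 1 := by
      intro z hz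
      rw [Walk.edges_cons, List.mem_cons] at hz
      rcases hz with hz | hz
      · exact Or.inl (Sym2.congr_right.mp hz)
      · right
        have : s(a, z) ∈ q.reverse.edges := by
          rw [Walk.edges_reverse, List.mem_reverse]; exact hz
        exact eq_getVert_one_of_mem_edges q.reverse hqrnd this
    have core : ∀ y : V, y ≠ a → y = q.reverse.getVert 1 →
        s(v, y) ∈ (Walk.cons hadj q).edges → False := by
      intro y hya hy hedge
      rw [Walk.edges_cons, List.mem_cons] at hedge
      rcases hedge with hedge | hedge
      · rw [Sym2.eq_swap] at hedge
        have := Sym2.congr_left.mp hedge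
        exact hya this
      · have h1 : y = q.getVert 1 := eq_getVert_one_of_mem_edges q hqnd hedge
        have h2 : y = q.getVert (q.length - 1) := by
          rw [hy, Walk.getVert_reverse]
        have heq : q.getVert 1 = q.getVert (q.length - 1) := h1 ▸ h2
        have := getVert_inj q hqnd (by omega) (by omega) heq
        omega
    rcases key b h1' with rfl | hb
    · rcases key c h2' with rfl | hc
      · exact hbc rfl
      · exact core c hac.symm hc h3'
    · rcases key c h2' with rfl | hc
      · rw [Sym2.eq_swap] at h3'
        exact core b hab.symm hb h3'
      · exact hbc (hb.trans hc.symm)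

/-- In a cycle of length at least 4, no three distinct vertices are pairwise
joined by edges of the cycle. -/
lemma not_triangle_of_isCycle [DecidableEq V] {G : SimpleGraph V} {r a b c : V}
    (w : G.Walk r r) (hw : w.IsCycle) (hlen : 4 ≤ w.length) (hab : a ≠ b) (hac : a ≠ c)
    (hbc : b ≠ c) (h1 : s(a, b) ∈ w.edges) (h2 : s(a, c) ∈ w.edges)
    (h3 : s(b, c) ∈ w.edges) : False := by
  have ha : a ∈ w.support := Walk.fst_mem_support_of_mem_edges w h1
  have hrot : ∀ e : Sym2 V, e ∈ w.edges → e ∈ (w.rotate a ha).edges := fun e he =>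
    (Walk.rotate_edges w a ha).mem_iff.mpr he
  exact not_triangle_base (w.rotate a ha) (hw.rotate ha)
    (by rw [length_rotate]; exact hlen) hab hac hbc
    (hrot _ h1) (hrot _ h2) (hrot _ h3)

lemma append_isCycle {G : SimpleGraph V} {x y : V} (p : G.Walk x y) (q : G.Walk y x)
    (hp : p.IsPath) (hq : q.IsPath) (hxy : x ≠ y)
    (hsup : ∀ z, z ∈ p.support → z ∈ q.support → z = x ∨ z = y)
    (hedge : ∀ e, e ∈ p.edges → e ∈ q.edges → False) :
    (p.append q).IsCycle := by
  rw [Walk.isCycle_def]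
  refine ⟨?_, ?_, ?_⟩
  · rw [Walk.isTrail_def, Walk.edges_append, List.nodup_append]
    exact ⟨hp.isTrail.edges_nodup, hq.isTrail.edges_nodup, fun e he e' he' heq => hedge e he (heq ▸ he')⟩
  · intro h
    have := congrArg Walk.length h
    rw [Walk.length_append] at this
    simp only [Walk.length_nil] at this
    exact hxy (Walk.eq_of_length_eq_zero (p := p) (by omega))
  · rw [Walk.support_append, Walk.support_eq_cons p, List.cons_append, List.tail_cons]
    rw [List.nodup_append]
    have hpnd := hp.support_nodup
    have hqnd := hq.support_nodup
    rw [Walk.support_eq_cons p, List.nodup_cons] at hpnd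
    rw [Walk.support_eq_cons q, List.nodup_cons] at hqnd
    refine ⟨hpnd.2, hqnd.2, fun z hz z' hz' => ?_⟩
    rintro rfl
    have hz2 : z ∈ p.support := by rw [Walk.support_eq_cons p]; exact List.mem_cons_of_mem _ hz
    have hz3 : z ∈ q.support := by rw [Walk.support_eq_cons q]; exact List.mem_cons_of_mem _ hz'
    rcases hsup z hz2 hz3 with rfl | rfl
    · exact hpnd.1 hz
    · exact hqnd.1 hz'

/-- A walk of minimal length between two vertices, which is a path. -/
lemma exists_min_path {G : SimpleGraph V} {x y : V} (h : G.Reachable x y) :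
    ∃ p : G.Walk x y, p.IsPath ∧ ∀ r : G.Walk x y, p.length ≤ r.length := by
  classical
  have hne : {n : ℕ | ∃ r : G.Walk x y, r.length = n}.Nonempty := ⟨_, h.some, rfl⟩
  obtain ⟨r, hr⟩ := Nat.sInf_mem hne
  refine ⟨r.bypass, r.bypass_isPath, fun r' => ?_⟩
  calc r.bypass.length ≤ r.length := Walk.length_bypass_le r
  _ ≤ r'.length := by rw [hr]; exact Nat.sInf_le ⟨r', rfl⟩

/-- On a minimal-length walk, any edge of the graph between two support
vertices is an edge of the walk. -/
lemma min_walk_chord [DecidableEq V] {G : SimpleGraph V} {x y u w : V} (p : G.Walk x y)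
    (hmin : ∀ r : G.Walk x y, p.length ≤ r.length) (hadj : G.Adj u w)
    (hu : u ∈ p.support) (hw : w ∈ p.support) : s(u, w) ∈ p.edges := by
  by_contra hne
  -- split at u
  have hspec := p.take_spec hu
  have hlen : (p.takeUntil u hu).length + (p.dropUntil u hu).length = p.length := by
    have := congrArg Walk.length hspec
    rwa [Walk.length_append] at this
  have hwmem : w ∈ (p.takeUntil u hu).support ∨ w ∈ (p.dropUntil u hu).support := by
    have := hspec ▸ hw
    rw [Walk.mem_support_append_iff] at this
    exact this
  rcases hwmem with hw1 | hw2
  · -- w occurs before u : shortcut from w to u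
    set q1 := p.takeUntil u hu with hq1
    have hs : (q1.takeUntil w hw1).length + (q1.dropUntil w hw1).length = q1.length := by
      have := congrArg Walk.length (q1.take_spec hw1)
      rwa [Walk.length_append] at this
    have hdrop : 1 ≤ (q1.dropUntil w hw1).length := by
      rcases Nat.eq_zero_or_pos (q1.dropUntil w hw1).length with h0 | h1
      · exact absurd (Walk.eq_of_length_eq_zero h0) hadj.ne'
      · exact h1
    by_cases h2 : (q1.dropUntil w hw1).length = 1
    · -- the edge w-u is on the walk
      apply hne
      have : s(w, u) ∈ (q1.dropUntil w hw1).edges := by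
        cases hq : q1.dropUntil w hw1 with
        | nil => rw [hq] at h2; simp at h2
        | cons h q' =>
          cases q' with
          | nil => simp
          | cons h' q'' => rw [hq] at h2; simp at h2
      rw [Sym2.eq_swap]
      exact Walk.edges_takeUntil_subset p hu (Walk.edges_dropUntil_subset q1 hw1 this)
    · -- shortcut
      have hshort := hmin (((q1.takeUntil w hw1).append
        (Walk.cons hadj.symm (p.dropUntil u hu))))
      rw [Walk.length_append, Walk.length_cons] at hshort
      omega
  · set q2 := p.dropUntil u hu with hq2
    have hs : (q2.takeUntil w hw2).length + (q2.dropUntil w hw2).length = q2.length := by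
      have := congrArg Walk.length (q2.take_spec hw2)
      rwa [Walk.length_append] at this
    have hdrop : 1 ≤ (q2.takeUntil w hw2).length := by
      rcases Nat.eq_zero_or_pos (q2.takeUntil w hw2).length with h0 | h1
      · exact absurd (Walk.eq_of_length_eq_zero h0) hadj.ne
      · exact h1
    by_cases h2 : (q2.takeUntil w hw2).length = 1
    · apply hne
      have : s(u, w) ∈ (q2.takeUntil w hw2).edges := by
        cases hq : q2.takeUntil w hw2 with
        | nil => rw [hq] at h2; simp at h2
        | cons h q' =>
          cases q' with
          | nil => simp
          | cons h' q'' => rw [hq] at h2; simp at h2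
      exact Walk.edges_dropUntil_subset p hu (Walk.edges_takeUntil_subset q2 hw2 this)
    · have hshort := hmin ((p.takeUntil u hu).append
        (Walk.cons hadj (q2.dropUntil w hw2)))
      rw [Walk.length_append, Walk.length_cons] at hshort
      omega


lemma support_restrict_subset {G : SimpleGraph V} {t : Set V} {c d : V}
    (p : (restrict G t).Walk c d) (hc : c ∈ t) : ∀ z ∈ p.support, z ∈ t := by
  induction p with
  | nil => intro z hz; simp only [Walk.support_nil, List.mem_singleton] at hz; exact hz ▸ hc
  | cons h q ih =>
    intro z hz
    rw [Walk.support_cons, List.mem_cons] at hz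
    rcases hz with rfl | hz
    · exact hc
    · exact ih h.2.1 z hz

lemma reachable_restrict_of_support {G : SimpleGraph V} {t₁ t₂ : Set V} {c d : V}
    (p : (restrict G t₁).Walk c d) (hsub : ∀ z ∈ p.support, z ∈ t₂) :
    (restrict G t₂).Reachable c d := by
  induction p with
  | nil => rfl
  | @cons u v w h q ih =>
    have h1 : (restrict G t₂).Adj u v :=
      ⟨hsub u (by simp), hsub v (by simp [Walk.support_cons]), h.2.2⟩
    exact h1.reachable.trans (ih fun z hz => hsub z (by simp [Walk.support_cons, hz]))

lemma adj_of_length_one {G : SimpleGraph V} {x y : V} (p : G.Walk x y)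
    (h : p.length = 1) : G.Adj x y := by
  cases p with
  | nil => simp at h
  | @cons _ u _ hadj q =>
    rw [Walk.length_cons] at h
    have hu : u = y := Walk.eq_of_length_eq_zero (p := q) (by omega)
    exact hu ▸ hadj

/-- `v` is simplicial in the subgraph induced on `s`. -/
def Simp (G : SimpleGraph V) (s : Set V) (v : V) : Prop :=
  v ∈ s ∧ ∀ u w, u ∈ s → w ∈ s → G.Adj v u → G.Adj v w → u ≠ w → G.Adj u w

/-- Dirac's theorem: a finite nonempty chordal graph has a simplicial vertex; if it is
not complete, it has two nonadjacent simplicial vertices. -/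
lemma dirac [Fintype V] [DecidableEq V] {G : SimpleGraph V} (hG : IsChordal G) :
    ∀ (n : ℕ) (s : Set V), s.ncard = n → s.Nonempty →
      (∃ v, Simp G s v) ∧
      (∀ a b, a ∈ s → b ∈ s → a ≠ b → ¬ G.Adj a b →
        ∃ v w, Simp G s v ∧ Simp G s w ∧ v ≠ w ∧ ¬ G.Adj v w) := by
  intro n
  induction n using Nat.strong_induction_on with
  | _ n ih =>
  intro s hcard hne
  by_cases hcomp : ∀ a b, a ∈ s → b ∈ s → a ≠ b → G.Adj a b
  · refine ⟨⟨hne.some, hne.some_mem, fun u w hu hw _ _ hne' => hcomp u w hu hw hne'⟩, ?_⟩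
    intro a b ha hb hab hnadj
    exact absurd (hcomp a b ha hb hab) hnadj
  have key : ∀ a b, a ∈ s → b ∈ s → a ≠ b → ¬ G.Adj a b →
      ∃ v w, Simp G s v ∧ Simp G s w ∧ v ≠ w ∧ ¬ G.Adj v w := by
    intro a b ha hb hab hnadj
    -- the family of separators
    set 𝒮 : Set (Set V) := {S | S ⊆ s \ {a, b} ∧ ¬ (restrict G (s \ S)).Reachable a b}
      with h𝒮
    have hS₀ : (s \ {a, b}) ∈ 𝒮 := by
      constructor
      · exact le_refl _
      · intro hreach
        obtain ⟨p⟩ := hreach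
        cases p with
        | nil => exact hab rfl
        | @cons _ u _ h q =>
          have hu : u ∈ s \ (s \ {a, b}) := h.2.1
          have hu2 : u ∈ ({a, b} : Set V) := by
            rcases hu with ⟨hus, hun⟩
            by_contra hu3
            exact hun ⟨hus, hu3⟩
          rcases hu2 with rfl | rfl
          · exact h.2.2.ne rfl
          · exact hnadj h.2.2
    -- minimal separator
    have hnonem : {m : ℕ | ∃ S ∈ 𝒮, S.ncard = m}.Nonempty := ⟨_, _, hS₀, rfl⟩
    obtain ⟨S, hS𝒮, hScard⟩ := Nat.sInf_mem hnonem
    have hSmin : ∀ S' ∈ 𝒮, S.ncard ≤ S'.ncard := fun S' hS' => by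
      rw [hScard]; exact Nat.sInf_le ⟨S', hS', rfl⟩
    obtain ⟨hSsub, hSsep⟩ := hS𝒮
    set R := restrict G (s \ S) with hR
    set A : Set V := {u | u ∈ s \ S ∧ R.Reachable a u} with hA
    set B : Set V := {u | u ∈ s \ S ∧ R.Reachable b u} with hB
    have haS : a ∈ s \ S := ⟨ha, fun h => ((hSsub h).2 (by simp))⟩
    have hbS : b ∈ s \ S := ⟨hb, fun h => ((hSsub h).2 (by simp))⟩
    have haA : a ∈ A := ⟨haS, Reachable.refl a⟩
    have hbB : b ∈ B := ⟨hbS, Reachable.refl b⟩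
    have hdisj : ∀ z, z ∈ A → z ∈ B → False := fun z hzA hzB =>
      hSsep (hzA.2.trans hzB.2.symm)
    have hnadjAB : ∀ u w, u ∈ A → w ∈ B → ¬ G.Adj u w := by
      intro u w hu hw hadj
      exact hSsep (hu.2.trans ((Adj.reachable ⟨hu.1, hw.1, hadj⟩ : R.Reachable u w).trans
        hw.2.symm))
    -- a walk from c to x (first visit of separator) gives a neighbour of x
    -- in the component of c
    have hnbr : ∀ x, x ∈ S → ∀ (c : V), c ∈ s \ S →
        ∀ (W0 : (restrict G (s \ (S \ {x}))).Walk c x),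
        ∃ u, G.Adj x u ∧ u ∈ s \ S ∧ R.Reachable c u := by
      intro x hx c hc W0
      have hxW : x ∈ W0.support := Walk.end_mem_support W0
      set T := W0.takeUntil x hxW with hT
      have hcount : T.support.count x = 1 := W0.count_support_takeUntil_eq_one hxW
      have hxc : x ≠ c := fun h => hc.2 (h ▸ hx)
      have hTnn : ¬ T.reverse.Nil := Walk.not_nil_of_ne hxc
      obtain ⟨u, hadj, q, hq⟩ := Walk.not_nil_iff.mp hTnn
      have hxq : x ∉ q.support := by
        intro hmem
        have h1 : T.reverse.support.count x = 1 := by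
          rw [Walk.support_reverse, List.count_reverse]; exact hcount
        rw [hq, Walk.support_cons, List.count_cons_self] at h1
        have h0 : q.support.count x = 0 := by omega
        exact (List.count_eq_zero.mp h0) hmem
      obtain ⟨hx', hu', hadjG⟩ := hadj
      have huS : u ∈ s \ S := ⟨hu'.1, fun huSmem => hu'.2 ⟨huSmem, fun hux =>
        hadjG.ne' (by simpa using hux)⟩⟩
      refine ⟨u, hadjG, huS, ?_⟩
      have : (restrict G (s \ S)).Reachable c u := by
        apply reachable_restrict_of_support q.reverse
        intro z hz
        rw [Walk.support_reverse, List.mem_reverse] at hz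
        have hz1 : z ∈ s \ (S \ {x}) := support_restrict_subset q hu' z hz
        exact ⟨hz1.1, fun hzS => hz1.2 ⟨hzS, fun hzx =>
          hxq ((by simpa using hzx : z = x) ▸ hz)⟩⟩
      exact this
    -- separator vertices have neighbours in both components
    have hWex : ∀ x ∈ S, (restrict G (s \ (S \ {x}))).Reachable a b := by
      intro x hx
      by_contra hre
      have hmem : S \ {x} ∈ 𝒮 := ⟨fun z hz => hSsub hz.1, hre⟩
      have hlt : (S \ {x}).ncard < S.ncard := by
        have h1 := Set.ncard_diff_singleton_add_one hx S.toFinite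
        omega
      exact absurd (hSmin _ hmem) (by omega)

    have hnbrA : ∀ x ∈ S, ∃ u, G.Adj x u ∧ u ∈ A := by
      intro x hx
      obtain ⟨W⟩ := hWex x hx
      have hxsupW : x ∈ W.support := by
        by_contra hxW
        apply hSsep
        apply reachable_restrict_of_support W
        intro z hz
        have hz1 : z ∈ s \ (S \ {x}) := support_restrict_subset W
          ⟨ha, fun h => (hSsub h.1).2 (by simp)⟩ z hz
        exact ⟨hz1.1, fun hzS => hz1.2 ⟨hzS, fun hzx =>
          hxW ((by simpa using hzx : z = x) ▸ hz)⟩⟩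
      obtain ⟨u, h1, h2, h3⟩ := hnbr x hx a haS (W.takeUntil x hxsupW)
      exact ⟨u, h1, h2, h3⟩
    have hnbrB : ∀ x ∈ S, ∃ u, G.Adj x u ∧ u ∈ B := by
      intro x hx
      obtain ⟨W⟩ := hWex x hx
      have hxsupW : x ∈ W.reverse.support := by
        rw [Walk.support_reverse, List.mem_reverse]
        by_contra hxW
        apply hSsep
        apply reachable_restrict_of_support W
        intro z hz
        have hz1 : z ∈ s \ (S \ {x}) := support_restrict_subset W
          ⟨ha, fun h => (hSsub h.1).2 (by simp)⟩ z hz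
        exact ⟨hz1.1, fun hzS => hz1.2 ⟨hzS, fun hzx =>
          hxW ((by simpa using hzx : z = x) ▸ hz)⟩⟩
      obtain ⟨u, h1, h2, h3⟩ := hnbr x hx b hbS (W.reverse.takeUntil x hxsupW)
      exact ⟨u, h1, h2, h3⟩
    -- the separator is a clique
    have hSclique : ∀ x y, x ∈ S → y ∈ S → x ≠ y → G.Adj x y := by
      intro x y hx hy hxy
      by_contra hnxy
      obtain ⟨ux, hux1, hux2⟩ := hnbrA x hx
      obtain ⟨uy, huy1, huy2⟩ := hnbrA y hy
      obtain ⟨wx, hwx1, hwx2⟩ := hnbrB x hx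
      obtain ⟨wy, hwy1, hwy2⟩ := hnbrB y hy
      have hmidA : ∀ u w, u ∈ A → w ∈ A → (restrict G A).Reachable u w := by
        intro u w hu hw
        have h2 : ∀ z, z ∈ A → (restrict G A).Reachable a z := by
          intro z hz
          obtain ⟨p⟩ := hz.2
          apply reachable_restrict_of_support p
          intro t ht
          exact ⟨support_restrict_subset p haS t ht, ⟨p.takeUntil t ht⟩⟩
        exact (h2 u hu).symm.trans (h2 w hw)
      have hmidB : ∀ u w, u ∈ B → w ∈ B → (restrict G B).Reachable u w := by
        intro u w hu hw
        have h2 : ∀ z, z ∈ B → (restrict G B).Reachable b z := by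
          intro z hz
          obtain ⟨p⟩ := hz.2
          apply reachable_restrict_of_support p
          intro t ht
          exact ⟨support_restrict_subset p hbS t ht, ⟨p.takeUntil t ht⟩⟩
        exact (h2 u hu).symm.trans (h2 w hw)
      have hreachA : (restrict G (A ∪ {x, y})).Reachable x y := by
        have h1 : (restrict G (A ∪ {x, y})).Adj x ux := ⟨by simp, Or.inl hux2, hux1⟩
        have h3 : (restrict G (A ∪ {x, y})).Adj uy y := ⟨Or.inl huy2, by simp, huy1.symm⟩
        exact (h1.reachable.trans
          ((hmidA ux uy hux2 huy2).mono (restrict_mono G Set.subset_union_left))).trans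
          h3.reachable
      have hreachB : (restrict G (B ∪ {x, y})).Reachable x y := by
        have h1 : (restrict G (B ∪ {x, y})).Adj x wx := ⟨by simp, Or.inl hwx2, hwx1⟩
        have h3 : (restrict G (B ∪ {x, y})).Adj wy y := ⟨Or.inl hwy2, by simp, hwy1.symm⟩
        exact (h1.reachable.trans
          ((hmidB wx wy hwx2 hwy2).mono (restrict_mono G Set.subset_union_left))).trans
          h3.reachable
      obtain ⟨P₁, hP₁path, hP₁min⟩ := exists_min_path hreachA
      obtain ⟨P₂, hP₂path, hP₂min⟩ := exists_min_path hreachB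
      have hxyA : x ∈ A ∪ {x, y} := by simp
      have hxyB : x ∈ B ∪ {x, y} := by simp
      have hP₁len : 2 ≤ P₁.length := by
        rcases Nat.lt_or_ge P₁.length 2 with h | h
        · interval_cases hl : P₁.length
          · exact absurd (Walk.eq_of_length_eq_zero hl) hxy
          · exact absurd (adj_of_length_one P₁ hl).2.2 hnxy
        · exact h
      have hP₂len : 2 ≤ P₂.length := by
        rcases Nat.lt_or_ge P₂.length 2 with h | h
        · interval_cases hl : P₂.length
          · exact absurd (Walk.eq_of_length_eq_zero hl) hxy
          · exact absurd (adj_of_length_one P₂ hl).2.2 hnxy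
        · exact h
      have hsubA : ∀ e ∈ P₁.edges, e ∈ G.edgeSet := fun e he =>
        SimpleGraph.edgeSet_mono (restrict_le G _) (Walk.edges_subset_edgeSet P₁ he)
      have hsubB : ∀ e ∈ P₂.edges, e ∈ G.edgeSet := fun e he =>
        SimpleGraph.edgeSet_mono (restrict_le G _) (Walk.edges_subset_edgeSet P₂ he)
      set p : G.Walk x y := P₁.transfer G hsubA with hp
      set q : G.Walk y x := (P₂.transfer G hsubB).reverse with hq
      have hpsup : p.support = P₁.support := Walk.support_transfer _ _
      have hqsup : ∀ z, z ∈ q.support ↔ z ∈ P₂.support := by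
        intro z
        rw [hq, Walk.support_reverse, List.mem_reverse, Walk.support_transfer]
      have hpedge : p.edges = P₁.edges := Walk.edges_transfer _ _
      have hqedge : ∀ e, e ∈ q.edges ↔ e ∈ P₂.edges := by
        intro e
        rw [hq, Walk.edges_reverse, List.mem_reverse, Walk.edges_transfer]
      have hsupP₁ : ∀ z ∈ P₁.support, z ∈ A ∪ {x, y} :=
        support_restrict_subset P₁ hxyA
      have hsupP₂ : ∀ z ∈ P₂.support, z ∈ B ∪ {x, y} :=
        support_restrict_subset P₂ hxyB
      have hsup : ∀ z, z ∈ p.support → z ∈ q.support → z = x ∨ z = y := by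
        intro z h1 h2
        have hz1 := hsupP₁ z (hpsup ▸ h1)
        have hz2 := hsupP₂ z ((hqsup z).mp h2)
        rcases hz1 with hz1 | hz1
        · rcases hz2 with hz2 | hz2
          · exact (hdisj z hz1 hz2).elim
          · simpa using hz2
        · simpa using hz1
      have hcyc : (p.append q).IsCycle := by
        apply append_isCycle p q (hP₁path.transfer hsubA)
          ((hP₂path.transfer hsubB).reverse) hxy hsup
        intro e he1 he2
        induction e with
        | _ c d =>
          have hadjcd : G.Adj c d := Walk.adj_of_mem_edges p he1
          have hc1 : c ∈ p.support := Walk.fst_mem_support_of_mem_edges p he1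
          have hd1 : d ∈ p.support := Walk.snd_mem_support_of_mem_edges p he1
          have hc2 : c ∈ q.support := Walk.fst_mem_support_of_mem_edges q he2
          have hd2 : d ∈ q.support := Walk.snd_mem_support_of_mem_edges q he2
          rcases hsup c hc1 hc2 with rfl | rfl
          · rcases hsup d hd1 hd2 with rfl | rfl
            · exact hadjcd.ne rfl
            · exact hnxy hadjcd
          · rcases hsup d hd1 hd2 with rfl | rfl
            · exact hnxy hadjcd.symm
            · exact hadjcd.ne rfl
      have hlen4 : 4 ≤ (p.append q).length := by
        rw [Walk.length_append, hp, hq, Walk.length_reverse, Walk.length_transfer,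
          Walk.length_transfer]
        omega
      obtain ⟨u, w, hadjuw, hu, hw, hne⟩ := hG (p.append q) hcyc hlen4
      rw [Walk.mem_support_append_iff] at hu hw
      have hu' : u ∈ P₁.support ∨ u ∈ P₂.support := by
        rcases hu with h | h
        · exact Or.inl (hpsup ▸ h)
        · exact Or.inr ((hqsup u).mp h)
      have hw' : w ∈ P₁.support ∨ w ∈ P₂.support := by
        rcases hw with h | h
        · exact Or.inl (hpsup ▸ h)
        · exact Or.inr ((hqsup w).mp h)
      have hnle : s(u, w) ∉ p.edges ∧ s(u, w) ∉ q.edges := by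
        constructor <;> intro h <;> apply hne <;> rw [Walk.edges_append, List.mem_append]
        · exact Or.inl h
        · exact Or.inr h
      have both1 : u ∈ P₁.support → w ∈ P₁.support → False := by
        intro h1 h2
        have hadj' : (restrict G (A ∪ {x, y})).Adj u w :=
          ⟨hsupP₁ u h1, hsupP₁ w h2, hadjuw⟩
        have := min_walk_chord P₁ hP₁min hadj' h1 h2
        exact hnle.1 (hpedge ▸ this)
      have both2 : u ∈ P₂.support → w ∈ P₂.support → False := by
        intro h1 h2
        have hadj' : (restrict G (B ∪ {x, y})).Adj u w :=
          ⟨hsupP₂ u h1, hsupP₂ w h2, hadjuw⟩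
        have := min_walk_chord P₂ hP₂min hadj' h1 h2
        exact hnle.2 ((hqedge _).mpr this)
      by_cases hu1 : u ∈ P₁.support <;> by_cases hw1 : w ∈ P₁.support
      · exact both1 hu1 hw1
      · -- w strictly in P₂
        have hw2 : w ∈ P₂.support := hw'.resolve_left hw1
        by_cases hu2 : u ∈ P₂.support
        · exact both2 hu2 hw2
        · -- u strictly in P₁, w strictly in P₂
          have huA : u ∈ A := by
            rcases hsupP₁ u hu1 with h | h
            · exact h
            · exfalso
              rcases (by simpa using h : u = x ∨ u = y) with rfl | rfl
              · exact hu2 (Walk.start_mem_support P₂)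
              · exact hu2 (Walk.end_mem_support P₂)
          have hwB : w ∈ B := by
            rcases hsupP₂ w hw2 with h | h
            · exact h
            · exfalso
              rcases (by simpa using h : w = x ∨ w = y) with rfl | rfl
              · exact hw1 (Walk.start_mem_support P₁)
              · exact hw1 (Walk.end_mem_support P₁)
          exact hnadjAB u w huA hwB hadjuw
      · have hu2 : u ∈ P₂.support := hu'.resolve_left hu1
        by_cases hw2 : w ∈ P₂.support
        · exact both2 hu2 hw2
        · have hwA : w ∈ A := by
            rcases hsupP₁ w hw1 with h | h
            · exact h
            · exfalso
              rcases (by simpa using h : w = x ∨ w = y) with rfl | rfl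
              · exact hw2 (Walk.start_mem_support P₂)
              · exact hw2 (Walk.end_mem_support P₂)
          have huB : u ∈ B := by
            rcases hsupP₂ u hu2 with h | h
            · exact h
            · exfalso
              rcases (by simpa using h : u = x ∨ u = y) with rfl | rfl
              · exact hu1 (Walk.start_mem_support P₁)
              · exact hu1 (Walk.end_mem_support P₁)
          exact hnadjAB w u hwA huB hadjuw.symm
      · exact hw'.elim (fun h => (hw1 h).elim) (fun hw2 =>
          hu'.elim (fun h => (hu1 h).elim) (fun hu2 => both2 hu2 hw2))
    -- one simplicial vertex inside each component
    have side : ∀ (c : V) (C : Set V), C = {u | u ∈ s \ S ∧ R.Reachable c u} → c ∈ C →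
        (∃ d, d ∈ s ∧ d ∉ C ∧ d ∉ S) → ∃ v, v ∈ C ∧ Simp G s v := by
      intro c C hCdef hcC hd
      obtain ⟨d, hds, hdC, hdS⟩ := hd
      have hCsub : C ⊆ s \ S := by rw [hCdef]; exact fun u hu => hu.1
      have hclose : ∀ v u, v ∈ C → u ∈ s → G.Adj v u → u ∈ C ∪ S := by
        intro v u hv hu hadj
        by_cases huS : u ∈ S
        · exact Or.inr huS
        · left
          have hv' := hCsub hv
          rw [hCdef] at hv ⊢
          exact ⟨⟨hu, huS⟩, hv.2.trans (Adj.reachable ⟨hv', ⟨hu, huS⟩, hadj⟩)⟩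
      have hsub1 : C ∪ S ⊆ s := by
        intro z hz
        rcases hz with hz | hz
        · exact (hCsub hz).1
        · exact (hSsub hz).1
      have hss : C ∪ S ⊂ s := by
        rw [Set.ssubset_def]
        exact ⟨hsub1, fun h => (h hds).elim (fun h1 => hdC h1) (fun h1 => hdS h1)⟩
      have hlt : (C ∪ S).ncard < n := hcard ▸ Set.ncard_lt_ncard hss s.toFinite
      obtain ⟨h1, h2⟩ := ih _ hlt (C ∪ S) rfl ⟨c, Or.inl hcC⟩
      have hvC : ∃ v, v ∈ C ∧ Simp G (C ∪ S) v := by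
        by_cases hcomp₁ : ∀ u w, u ∈ C ∪ S → w ∈ C ∪ S → u ≠ w → G.Adj u w
        · exact ⟨c, hcC, Or.inl hcC, fun u w hu hw _ _ hne' => hcomp₁ u w hu hw hne'⟩
        · push_neg at hcomp₁
          obtain ⟨u, w, hu, hw, huw, hnadj'⟩ := hcomp₁
          obtain ⟨v, v', hsv, hsv', hvv', hnvv'⟩ := h2 u w hu hw huw hnadj'
          rcases hsv.1 with hvmem | hvmem
          · exact ⟨v, hvmem, hsv⟩
          · rcases hsv'.1 with hvmem' | hvmem'
            · exact ⟨v', hvmem', hsv'⟩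
            · exact absurd (hSclique v v' hvmem hvmem' hvv') hnvv'
      obtain ⟨v, hvC', hsimp₁⟩ := hvC
      have hnb : ∀ u, u ∈ s → G.Adj v u → u ∈ C ∪ S := fun u hu hadj =>
        hclose v u hvC' hu hadj
      exact ⟨v, hvC', (hCsub hvC').1, fun u w hu hw hh1 hh2 hne' =>
        hsimp₁.2 u w (hnb u hu hh1) (hnb w hw hh2) hh1 hh2 hne'⟩
    obtain ⟨v, hvA, hvS⟩ := side a A (by rw [hA]) haA
      ⟨b, hb, fun h => hdisj b h hbB, fun h => (hSsub h).2 (by simp)⟩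
    obtain ⟨w, hwB, hwS⟩ := side b B (by rw [hB]) hbB
      ⟨a, ha, fun h => hdisj a haA h, fun h => (hSsub h).2 (by simp)⟩
    refine ⟨v, w, hvS, hwS, ?_, ?_⟩
    · rintro rfl
      exact hdisj v hvA hwB
    · intro hadj
      have hvs := hvA.1
      have hws := hwB.1
      exact hSsep (hvA.2.trans ((Adj.reachable ⟨hvs, hws, hadj⟩ : R.Reachable v w).trans
        hwB.2.symm))
  push_neg at hcomp
  obtain ⟨a, b, ha, hb, hab, hnadj⟩ := hcomp
  obtain ⟨v, w, h1, _, _, _⟩ := key a b ha hb hab hnadj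
  exact ⟨⟨v, h1⟩, fun a' b' ha' hb' hab' hnadj' => key a' b' ha' hb' hab' hnadj'⟩


/-- Eliminating a vertex: delete it and complete its neighbourhood. -/
def elim (G' : SimpleGraph V) (v : V) : SimpleGraph V where
  Adj x y := x ≠ v ∧ y ≠ v ∧ (G'.Adj x y ∨ (x ≠ y ∧ G'.Adj v x ∧ G'.Adj v y))
  symm := ⟨by
    rintro x y ⟨h1, h2, h3 | ⟨h3, h4, h5⟩⟩
    · exact ⟨h2, h1, Or.inl h3.symm⟩
    · exact ⟨h2, h1, Or.inr ⟨h3.symm, h5, h4⟩⟩⟩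
  loopless := ⟨by
    rintro x ⟨h1, h2, h3 | ⟨h3, h4, h5⟩⟩
    · exact G'.loopless.irrefl x h3
    · exact h3 rfl⟩

lemma dart_fst_ne_end {G : SimpleGraph V} {u w : V} (p : G.Walk u w) (hp : p.IsPath)
    {d : G.Dart} (hd : d ∈ p.darts) : d.fst ≠ w := by
  induction p with
  | nil => simp at hd
  | @cons a m _ h q ih =>
    rw [Walk.darts_cons, List.mem_cons] at hd
    rcases hd with rfl | hd
    · intro hcon
      have h1 : a ∉ q.support := by
        have := hp.support_nodup
        rw [Walk.support_cons, List.nodup_cons] at this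
        exact this.1
      exact h1 (hcon ▸ Walk.end_mem_support q)
    · exact ih (hp.of_cons) hd

lemma elim_surgery {G' : SimpleGraph V} (hG' : IsChordal G') {v x y : V}
    (hadj : (elim G' v).Adj x y) (rest : (elim G' v).Walk y x)
    (hcyc : (Walk.cons hadj rest).IsCycle)
    (hlen : 4 ≤ (Walk.cons hadj rest).length)
    (hchord : ∀ p q, (elim G' v).Adj p q → p ∈ (Walk.cons hadj rest).support →
      q ∈ (Walk.cons hadj rest).support → s(p, q) ∈ (Walk.cons hadj rest).edges)
    (hfill : ¬ G'.Adj x y) (hvx : G'.Adj v x) (hvy : G'.Adj v y)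
    (hvsup : ∀ z ∈ (Walk.cons hadj rest).support, z ≠ v)
    (hN : ∀ z ∈ (Walk.cons hadj rest).support, G'.Adj v z → z = x ∨ z = y) : False := by
  obtain ⟨hpath, hhead⟩ := (Walk.cons_isCycle_iff rest hadj).mp hcyc
  have hxyne : x ≠ y := hadj.ne
  have hrestsub : ∀ z ∈ rest.support, z ∈ (Walk.cons hadj rest).support := by
    intro z hz; rw [Walk.support_cons]; exact List.mem_cons_of_mem _ hz
  have hrestreal : ∀ e ∈ rest.edges, e ∈ G'.edgeSet := by
    intro e he
    by_contra hnre
    induction e with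
    | _ p q =>
      obtain ⟨hpv, hqv, hor⟩ := Walk.adj_of_mem_edges rest he
      rcases hor with hor | ⟨hpq, hvp, hvq⟩
      · exact hnre hor
      · have hp1 := hN p (hrestsub p (Walk.fst_mem_support_of_mem_edges rest he)) hvp
        have hq1 := hN q (hrestsub q (Walk.snd_mem_support_of_mem_edges rest he)) hvq
        have : s(p, q) = s(x, y) := by
          rcases hp1 with rfl | rfl
          · rcases hq1 with rfl | rfl
            · exact absurd rfl hpq
            · rfl
          · rcases hq1 with rfl | rfl
            · rw [Sym2.eq_swap]
            · exact absurd rfl hpq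
        exact hhead (this ▸ he)
  have hvrest : v ∉ rest.support := fun h => hvsup v (hrestsub v h) rfl
  set rest' := rest.transfer G' hrestreal with hrest'
  have hsup' : rest'.support = rest.support := Walk.support_transfer _ _
  have hedg' : rest'.edges = rest.edges := Walk.edges_transfer _ _
  set tail : G'.Walk y v := rest'.append (Walk.cons hvx.symm Walk.nil) with htail
  set D : G'.Walk v v := Walk.cons hvy tail with hD
  have htailsup : tail.support = rest.support ++ [v] := by
    rw [htail, Walk.support_append, hsup']
    simp
  have htailedges : tail.edges = rest.edges ++ [s(x, v)] := by
    rw [htail, Walk.edges_append, hedg']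
    simp
  have hDcyc : D.IsCycle := by
    rw [hD, Walk.cons_isCycle_iff]
    constructor
    · rw [Walk.isPath_def, htailsup]
      rw [List.nodup_append]
      refine ⟨hsup' ▸ (hpath.transfer hrestreal).support_nodup,
        List.nodup_singleton v, ?_⟩
      intro z hz z' hz' hzz'
      rw [List.mem_singleton] at hz'
      subst hzz'
      exact hvrest (hz' ▸ hz)
    · rw [htailedges]
      intro hmem
      rw [List.mem_append, List.mem_singleton] at hmem
      rcases hmem with hmem | hmem
      · exact hvrest (Walk.fst_mem_support_of_mem_edges rest hmem)
      · rw [Sym2.eq_iff] at hmem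
        rcases hmem with ⟨h1, h2⟩ | ⟨h1, h2⟩
        · exact hvx.ne h1
        · exact hxyne h2.symm
  have hDlen : 4 ≤ D.length := by
    have h1 : (Walk.cons hadj rest).length = rest.length + 1 := Walk.length_cons _ _
    have h2 : D.length = rest.length + 2 := by
      rw [hD, Walk.length_cons, htail, Walk.length_append, Walk.length_transfer]
      simp
    omega
  obtain ⟨p, q, hpq, hp, hq, hnpq⟩ := hG' D hDcyc hDlen
  have hDsup : ∀ z, z ∈ D.support ↔ (z = v ∨ z ∈ rest.support) := by
    intro z
    rw [hD, Walk.support_cons, List.mem_cons, htailsup, List.mem_append, List.mem_singleton]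
    tauto
  have hDedges : D.edges = s(v, y) :: (rest.edges ++ [s(x, v)]) := by
    rw [hD, Walk.edges_cons, htailedges]
  have hvcase : ∀ z, G'.Adj v z → z ∈ rest.support → s(v, z) ∈ D.edges := by
    intro z hvz hzsup
    rcases hN z (hrestsub z hzsup) hvz with h | h
    · rw [hDedges, h]
      exact List.mem_cons_of_mem _ (List.mem_append.mpr (Or.inr (by
        rw [Sym2.eq_swap]; exact List.mem_singleton_self _)))
    · rw [hDedges, h]
      exact List.mem_cons_self
  rcases (hDsup p).mp hp with hpv | hprest
  · rcases (hDsup q).mp hq with hqv | hqrest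
    · exact hpq.ne (hpv.trans hqv.symm)
    · subst hpv
      exact hnpq (hvcase q hpq hqrest)
  · rcases (hDsup q).mp hq with hqv | hqrest
    · subst hqv
      exact hnpq (by rw [Sym2.eq_swap]; exact hvcase p hpq.symm hprest)
    · have helim : (elim G' v).Adj p q :=
        ⟨hvsup p (hrestsub p hprest), hvsup q (hrestsub q hqrest), Or.inl hpq⟩
      have := hchord p q helim (hrestsub p hprest) (hrestsub q hqrest)
      rw [Walk.edges_cons, List.mem_cons] at this
      rcases this with hthis | hthis
      · rw [Sym2.eq_iff] at hthis
        rcases hthis with ⟨h1, h2⟩ | ⟨h1, h2⟩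
        · exact hfill (h1 ▸ h2 ▸ hpq)
        · exact hfill (h1 ▸ h2 ▸ hpq.symm)
      · exact hnpq (by
          rw [hDedges]
          exact List.mem_cons_of_mem _ (List.mem_append.mpr (Or.inl hthis)))

lemma isChordal_elim [DecidableEq V] {G' : SimpleGraph V} (hG' : IsChordal G') (v : V) :
    IsChordal (elim G' v) := by
  intro r c hc hlen
  by_contra hch
  push_neg at hch
  have hvsup : ∀ z ∈ c.support, z ≠ v := by
    intro z hz
    obtain ⟨w, hw⟩ := exists_adj_of_mem_support c hc.not_nil hz
    exact hw.1
  by_cases hreal : ∀ e ∈ c.edges, e ∈ G'.edgeSet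
  · obtain ⟨u, w, hadj, hu, hw, hne⟩ :=
      hG' (c.transfer G' hreal) (hc.transfer hreal) (by rwa [Walk.length_transfer])
    rw [Walk.support_transfer] at hu hw
    rw [Walk.edges_transfer] at hne
    exact hne (hch u w ⟨hvsup u hu, hvsup w hw, Or.inl hadj⟩ hu hw)
  · push_neg at hreal
    obtain ⟨e, he, hnotreal⟩ := hreal
    induction e with
    | _ x y =>
      obtain ⟨hxv, hyv, hor⟩ := Walk.adj_of_mem_edges c he
      have hfill : ¬ G'.Adj x y := hnotreal
      obtain ⟨hxy, hvx, hvy⟩ : x ≠ y ∧ G'.Adj v x ∧ G'.Adj v y := by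
        rcases hor with hor | hor
        · exact absurd hor hfill
        · exact hor
      -- N-clique property
      have hN : ∀ z ∈ c.support, G'.Adj v z → z = x ∨ z = y := by
        intro z hz hvz
        by_contra hcon
        push_neg at hcon
        obtain ⟨hzx, hzy⟩ := hcon
        have e1 : s(z, x) ∈ c.edges :=
          hch z x ⟨hvsup z hz, hxv, Or.inr ⟨hzx, hvz, hvx⟩⟩ hz
            (Walk.fst_mem_support_of_mem_edges c he)
        have e2 : s(z, y) ∈ c.edges :=
          hch z y ⟨hvsup z hz, hyv, Or.inr ⟨hzy, hvz, hvy⟩⟩ hz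
            (Walk.snd_mem_support_of_mem_edges c he)
        exact not_triangle_of_isCycle c hc hlen hzx hzy hxy e1 e2 he
      -- find the dart
      have hemap : c.edges = c.darts.map SimpleGraph.Dart.edge := rfl
      obtain ⟨d, hd, hde⟩ := List.mem_map.mp (hemap ▸ he)
      have hde' : (d.fst = x ∧ d.snd = y) ∨ (d.fst = y ∧ d.snd = x) := by
        have : s(d.fst, d.snd) = s(x, y) := hde
        rw [Sym2.eq_iff] at this
        exact this
      -- WLOG via a generic inner argument
      have main : ∀ x' y', x' ≠ y' → ¬ G'.Adj x' y' → G'.Adj v x' → G'.Adj v y' →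
          (∀ z ∈ c.support, G'.Adj v z → z = x' ∨ z = y') →
          d.fst = x' → d.snd = y' → False := by
        intro x' y' hxy' hfill' hvx' hvy' hN' hdf hds
        have hxsup : x' ∈ c.support := hdf ▸ Walk.dart_fst_mem_support_of_mem_darts c hd
        set c₁ := c.rotate x' hxsup with hc₁
        have hcyc₁ : c₁.IsCycle := hc.rotate hxsup
        have hlen₁ : 4 ≤ c₁.length := by rw [hc₁, length_rotate]; exact hlen
        have hdartmem : d ∈ c₁.darts := (Walk.rotate_darts c x' hxsup).mem_iff.mpr hd
        have hsupsub : ∀ z, z ∈ c₁.support → z ∈ c.support := by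
          intro z hz
          rw [Walk.support_eq_cons] at hz
          rcases List.mem_cons.mp hz with rfl | hz
          · exact hxsup
          · have := (Walk.support_rotate c x' hxsup).mem_iff.mp hz
            rw [Walk.support_eq_cons c]
            exact List.mem_cons_of_mem _ this
        have hedgemem : ∀ e', e' ∈ c₁.edges ↔ e' ∈ c.edges := fun e' =>
          (Walk.rotate_edges c x' hxsup).mem_iff
        have hchord₁ : ∀ p q, (elim G' v).Adj p q → p ∈ c₁.support → q ∈ c₁.support →
            s(p, q) ∈ c₁.edges := fun p q hA hp hq =>
          (hedgemem _).mpr (hch p q hA (hsupsub p hp) (hsupsub q hq))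
        have hvsup₁ : ∀ z ∈ c₁.support, z ≠ v := fun z hz => hvsup z (hsupsub z hz)
        have hN₁ : ∀ z ∈ c₁.support, G'.Adj v z → z = x' ∨ z = y' := fun z hz =>
          hN' z (hsupsub z hz)
        cases hc₂ : c₁ with
        | nil => rw [hc₂] at hcyc₁; exact hcyc₁.ne_nil rfl
        | @cons _ w₁ _ hadj₁ rest =>
          rw [hc₂] at hdartmem hcyc₁ hlen₁ hchord₁ hvsup₁ hN₁
          have hw₁ : w₁ = y' := by
            rw [Walk.darts_cons, List.mem_cons] at hdartmem
            rcases hdartmem with hdm | hdm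
            · have hsnd : d.snd = w₁ := by rw [hdm]
              exact hsnd.symm.trans hds
            · exfalso
              have hrpath : rest.IsPath := ((Walk.cons_isCycle_iff rest hadj₁).mp hcyc₁).1
              exact (dart_fst_ne_end rest hrpath hdm) hdf
          subst hw₁
          exact elim_surgery hG' hadj₁ rest hcyc₁ hlen₁ hchord₁ hfill' hvx' hvy' hvsup₁ hN₁
      rcases hde' with ⟨h1, h2⟩ | ⟨h1, h2⟩
      · exact main x y hxy hfill hvx hvy hN h1 h2
      · exact main y x hxy.symm (fun h => hfill h.symm) hvy hvx
          (fun z hz hvz => (hN z hz hvz).symm) h1 h2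


lemma mem_support_rotate [DecidableEq V] {G : SimpleGraph V} {r u z : V} (c : G.Walk r r)
    (h : u ∈ c.support) : z ∈ (c.rotate u h).support ↔ z ∈ c.support := by
  conv_rhs => rw [← c.take_spec h]
  rw [Walk.rotate, Walk.mem_support_append_iff, Walk.mem_support_append_iff]
  tauto

lemma walk_length_two {G : SimpleGraph V} {α β : V} (q : G.Walk α β) (h : q.length = 2) :
    ∃ m, G.Adj α m ∧ G.Adj m β ∧ q.support = [α, m, β] ∧ q.edges = [s(α, m), s(m, β)] := by
  cases q with
  | nil => simp at h
  | @cons _ m _ h1 q' =>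
    cases q' with
    | nil => simp at h
    | @cons _ m' _ h2 q'' =>
      have hq'' : q''.length = 0 := by
        simp only [Walk.length_cons] at h
        omega
      cases q'' with
      | nil => exact ⟨m, h1, h2, by simp, by simp⟩
      | cons _ _ => simp at hq''

/-- A split of a cycle at a second support point gives two internally disjoint paths. -/
lemma cycle_split [DecidableEq V] {G : SimpleGraph V} {a b : V} (c : G.Walk a a)
    (hc : c.IsCycle) (hb : b ∈ c.support) (hba : b ≠ a) :
    (c.takeUntil b hb).IsPath ∧ (c.dropUntil b hb).IsPath ∧
      (∀ z, z ∈ (c.takeUntil b hb).support → z ∈ (c.dropUntil b hb).support →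
        z = a ∨ z = b) := by
  set p₁ := c.takeUntil b hb with hp₁
  set p₂ := c.dropUntil b hb with hp₂
  have hspec : p₁.append p₂ = c := c.take_spec hb
  have hsupp : c.support = p₁.support ++ p₂.support.tail := by
    rw [← hspec, Walk.support_append]
  have htail : c.support.tail = p₁.support.tail ++ p₂.support.tail := by
    rw [hsupp, Walk.support_eq_cons p₁]
    simp
  have hnd : (p₁.support.tail ++ p₂.support.tail).Nodup := htail ▸ hc.2
  rw [List.nodup_append] at hnd
  obtain ⟨hnd₁, hnd₂, hdisj⟩ := hnd
  replace hdisj : ∀ {z}, z ∈ p₁.support.tail → z ∈ p₂.support.tail → False :=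
    fun h1 h2 => hdisj _ h1 _ h2 rfl
  have hamem : a ∈ p₂.support.tail := by
    have h1 : a ∈ p₂.support := Walk.end_mem_support p₂
    rw [Walk.support_eq_cons p₂] at h1
    exact (List.mem_cons.mp h1).resolve_left (fun h => hba h.symm)
  have hbmem : b ∈ p₁.support.tail := by
    have h1 : b ∈ p₁.support := Walk.end_mem_support p₁
    rw [Walk.support_eq_cons p₁] at h1
    exact (List.mem_cons.mp h1).resolve_left hba
  refine ⟨?_, ?_, ?_⟩
  · rw [Walk.isPath_def, Walk.support_eq_cons p₁, List.nodup_cons]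
    exact ⟨fun h => hdisj h hamem, hnd₁⟩
  · rw [Walk.isPath_def, Walk.support_eq_cons p₂, List.nodup_cons]
    exact ⟨fun h => hdisj hbmem h, hnd₂⟩
  · intro z hz1 hz2
    rw [Walk.support_eq_cons p₁, List.mem_cons] at hz1
    rw [Walk.support_eq_cons p₂, List.mem_cons] at hz2
    rcases hz1 with rfl | hz1
    · exact Or.inl rfl
    · rcases hz2 with rfl | hz2
      · exact Or.inr rfl
      · exact absurd hz2 (fun h => hdisj hz1 h)

lemma isChordal_deleteEdge [DecidableEq V] {G : SimpleGraph V} (hG : IsChordal G) {a b : V}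
    (hab : G.Adj a b)
    (hcl : ∀ x y, G.Adj a x → G.Adj b x → G.Adj a y → G.Adj b y → x ≠ y → G.Adj x y) :
    IsChordal (G.deleteEdges {s(a, b)}) := by
  intro r c hc hlen
  by_contra hch
  push_neg at hch
  have hHle : G.deleteEdges {s(a, b)} ≤ G := SimpleGraph.deleteEdges_le _
  have hHnadj : ¬ (G.deleteEdges {s(a, b)}).Adj a b := by
    rw [SimpleGraph.deleteEdges_adj]
    simp
  have hHadj : ∀ u w, G.Adj u w → s(u, w) ≠ s(a, b) → (G.deleteEdges {s(a, b)}).Adj u w := by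
    intro u w h1 h2
    rw [SimpleGraph.deleteEdges_adj]
    exact ⟨h1, by simp only [Set.mem_singleton_iff]; exact h2⟩
  have hsub : ∀ e ∈ c.edges, e ∈ G.edgeSet := fun e he =>
    SimpleGraph.edgeSet_mono hHle (Walk.edges_subset_edgeSet c he)
  -- every G-chord of c equals s(a,b)
  have huniq : ∀ u w, G.Adj u w → u ∈ c.support → w ∈ c.support → s(u, w) ∉ c.edges →
      s(u, w) = s(a, b) := by
    intro u w h hu hw hne
    by_contra hne2
    exact hne (hch u w (hHadj u w h hne2) hu hw)
  obtain ⟨u, w, hadjuw, hu, hw, hne⟩ :=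
    hG (c.transfer G hsub) (hc.transfer hsub) (by rwa [Walk.length_transfer])
  rw [Walk.support_transfer] at hu hw
  rw [Walk.edges_transfer] at hne
  have heq : s(u, w) = s(a, b) := huniq u w hadjuw hu hw hne
  have hnab : s(a, b) ∉ c.edges := by rw [heq] at hne; exact hne
  have hamem : a ∈ c.support ∧ b ∈ c.support := by
    rw [Sym2.eq_iff] at heq
    rcases heq with ⟨h1, h2⟩ | ⟨h1, h2⟩
    · exact ⟨h1 ▸ hu, h2 ▸ hw⟩
    · exact ⟨h2 ▸ hw, h1 ▸ hu⟩
  obtain ⟨ha, hb⟩ := hamem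
  -- rotate the cycle to start at a
  set c₁ := c.rotate a ha with hc₁
  have hcyc₁ : c₁.IsCycle := hc.rotate ha
  have hlen₁ : 4 ≤ c₁.length := by rw [hc₁, length_rotate]; exact hlen
  have hsupiff : ∀ z, z ∈ c₁.support ↔ z ∈ c.support := fun z => mem_support_rotate c ha
  have hedgeiff : ∀ e, e ∈ c₁.edges ↔ e ∈ c.edges := fun e => (Walk.rotate_edges c a ha).mem_iff
  have hb₁ : b ∈ c₁.support := (hsupiff b).mpr hb
  have hba : b ≠ a := hab.ne'
  obtain ⟨hp₁path, hp₂path, hcap⟩ := cycle_split c₁ hcyc₁ hb₁ hba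
  set p₁ := c₁.takeUntil b hb₁ with hp₁
  set p₂ := c₁.dropUntil b hb₁ with hp₂
  have hsplit : c₁.edges = p₁.edges ++ p₂.edges := by
    conv_lhs => rw [← c₁.take_spec hb₁]
    rw [Walk.edges_append]
  have hlensplit : p₁.length + p₂.length = c₁.length := by
    have := congrArg Walk.length (c₁.take_spec hb₁)
    rwa [Walk.length_append] at this
  have hp₁sub : ∀ z ∈ p₁.support, z ∈ c.support := fun z hz =>
    (hsupiff z).mp (Walk.support_takeUntil_subset c₁ hb₁ hz)
  have hp₂sub : ∀ z ∈ p₂.support, z ∈ c.support := fun z hz =>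
    (hsupiff z).mp (Walk.support_dropUntil_subset c₁ hb₁ hz)
  -- first arc has length exactly 2
  have harc₁ : p₁.length = 2 := by
    have hge1 : 1 ≤ p₁.length := by
      rcases Nat.eq_zero_or_pos p₁.length with h0 | h
      · exact absurd (Walk.eq_of_length_eq_zero (p := p₁) h0) hab.ne
      · exact h
    have hne1 : p₁.length ≠ 1 := fun h1 => hHnadj (adj_of_length_one p₁ h1)
    have hle2 : p₁.length ≤ 2 := by
      by_contra h3
      push_neg at h3
      have hsubp : ∀ e ∈ p₁.edges, e ∈ G.edgeSet := fun e he =>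
        SimpleGraph.edgeSet_mono hHle (Walk.edges_subset_edgeSet p₁ he)
      set pg := p₁.transfer G hsubp with hpg
      have habn : s(a, b) ∉ p₁.edges := fun hmem =>
        hnab ((hedgeiff _).mp (hsplit ▸ List.mem_append.mpr (Or.inl hmem)))
      set D : G.Walk a a := Walk.cons hab pg.reverse with hD
      have hDcyc : D.IsCycle := by
        rw [hD, Walk.cons_isCycle_iff]
        refine ⟨(hp₁path.transfer hsubp).reverse, ?_⟩
        intro h
        rw [Walk.edges_reverse, List.mem_reverse, Walk.edges_transfer] at h
        exact habn h
      have hDlen : 4 ≤ D.length := by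
        rw [hD, Walk.length_cons, Walk.length_reverse, Walk.length_transfer]
        omega
      obtain ⟨u', w', hadj', hu', hw', hne'⟩ := hG D hDcyc hDlen
      have hDsup : ∀ z, z ∈ D.support ↔ z ∈ p₁.support := by
        intro z
        rw [hD, Walk.support_cons, List.mem_cons, Walk.support_reverse, List.mem_reverse,
          Walk.support_transfer]
        constructor
        · rintro (rfl | h)
          · exact Walk.start_mem_support p₁
          · exact h
        · exact fun h => Or.inr h
      rw [hDsup] at hu' hw'
      have hDedges : ∀ e, e ∈ D.edges ↔ (e = s(a, b) ∨ e ∈ p₁.edges) := by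
        intro e
        rw [hD, Walk.edges_cons, List.mem_cons, Walk.edges_reverse, List.mem_reverse,
          Walk.edges_transfer]
      have hne'' : s(u', w') ≠ s(a, b) := fun h => hne' ((hDedges _).mpr (Or.inl h))
      have hmemc : s(u', w') ∈ c.edges := by
        by_contra hnc
        exact hne'' (huniq u' w' hadj' (hp₁sub u' hu') (hp₁sub w' hw') hnc)
      have hmem₁ : s(u', w') ∈ p₂.edges := by
        have hthis := (hedgeiff _).mpr hmemc
        rw [hsplit, List.mem_append] at hthis
        rcases hthis with h | h
        · exact absurd ((hDedges _).mpr (Or.inr h)) hne'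
        · exact h
      have hu2 : u' ∈ p₂.support := Walk.fst_mem_support_of_mem_edges p₂ hmem₁
      have hw2 : w' ∈ p₂.support := Walk.snd_mem_support_of_mem_edges p₂ hmem₁
      have hu3 := hcap u' hu' hu2
      have hw3 := hcap w' hw' hw2
      apply hne''
      rcases hu3 with rfl | rfl
      · rcases hw3 with rfl | rfl
        · exact absurd rfl hadj'.ne
        · rfl
      · rcases hw3 with rfl | rfl
        · rw [Sym2.eq_swap]
        · exact absurd rfl hadj'.ne
    omega
  -- second arc has length exactly 2
  have harc₂ : p₂.length = 2 := by
    have hge1 : 1 ≤ p₂.length := by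
      rcases Nat.eq_zero_or_pos p₂.length with h0 | h
      · exact absurd (Walk.eq_of_length_eq_zero (p := p₂) h0) hab.ne'
      · exact h
    have hne1 : p₂.length ≠ 1 := fun h1 => hHnadj (adj_of_length_one p₂ h1).symm
    have hle2 : p₂.length ≤ 2 := by
      by_contra h3
      push_neg at h3
      have hsubp : ∀ e ∈ p₂.edges, e ∈ G.edgeSet := fun e he =>
        SimpleGraph.edgeSet_mono hHle (Walk.edges_subset_edgeSet p₂ he)
      set pg := p₂.transfer G hsubp with hpg
      have habn : s(a, b) ∉ p₂.edges := fun hmem =>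
        hnab ((hedgeiff _).mp (hsplit ▸ List.mem_append.mpr (Or.inr hmem)))
      set D : G.Walk b b := Walk.cons hab.symm pg.reverse with hD
      have hDcyc : D.IsCycle := by
        rw [hD, Walk.cons_isCycle_iff]
        refine ⟨(hp₂path.transfer hsubp).reverse, ?_⟩
        intro h
        rw [Walk.edges_reverse, List.mem_reverse, Walk.edges_transfer] at h
        apply habn
        generalize p₂.edges = l at h ⊢
        rwa [Sym2.eq_swap]
      have hDlen : 4 ≤ D.length := by
        rw [hD, Walk.length_cons, Walk.length_reverse, Walk.length_transfer]
        omega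
      obtain ⟨u', w', hadj', hu', hw', hne'⟩ := hG D hDcyc hDlen
      have hDsup : ∀ z, z ∈ D.support ↔ z ∈ p₂.support := by
        intro z
        rw [hD, Walk.support_cons, List.mem_cons, Walk.support_reverse, List.mem_reverse,
          Walk.support_transfer]
        constructor
        · rintro (rfl | h)
          · exact Walk.start_mem_support p₂
          · exact h
        · exact fun h => Or.inr h
      rw [hDsup] at hu' hw'
      have hDedges : ∀ e, e ∈ D.edges ↔ (e = s(b, a) ∨ e ∈ p₂.edges) := by
        intro e
        rw [hD, Walk.edges_cons, List.mem_cons, Walk.edges_reverse, List.mem_reverse,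
          Walk.edges_transfer]
      have hne'' : s(u', w') ≠ s(a, b) := fun h =>
        hne' ((hDedges _).mpr (Or.inl (by rw [h, Sym2.eq_swap])))
      have hmemc : s(u', w') ∈ c.edges := by
        by_contra hnc
        exact hne'' (huniq u' w' hadj' (hp₂sub u' hu') (hp₂sub w' hw') hnc)
      have hmem₁ : s(u', w') ∈ p₁.edges := by
        have hthis := (hedgeiff _).mpr hmemc
        rw [hsplit, List.mem_append] at hthis
        rcases hthis with h | h
        · exact h
        · exact absurd ((hDedges _).mpr (Or.inr h)) hne'
      have hu2 : u' ∈ p₁.support := Walk.fst_mem_support_of_mem_edges p₁ hmem₁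
      have hw2 : w' ∈ p₁.support := Walk.snd_mem_support_of_mem_edges p₁ hmem₁
      have hu3 := hcap u' hu2 hu'
      have hw3 := hcap w' hw2 hw'
      apply hne''
      rcases hu3 with rfl | rfl
      · rcases hw3 with rfl | rfl
        · exact absurd rfl hadj'.ne
        · rfl
      · rcases hw3 with rfl | rfl
        · rw [Sym2.eq_swap]
        · exact absurd rfl hadj'.ne
    omega
  -- now the cycle is a 4-cycle a x b y, and the clique hypothesis gives a chord
  obtain ⟨x, hax, hxb, hsup₁, hedg₁⟩ := walk_length_two p₁ harc₁
  obtain ⟨y, hby, hya, hsup₂, hedg₂⟩ := walk_length_two p₂ harc₂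
  have hxa : x ≠ a := hax.ne'
  have hxbne : x ≠ b := hxb.ne
  have hyb : y ≠ b := hby.ne'
  have hyane : y ≠ a := hya.ne
  have hxy : x ≠ y := by
    rintro rfl
    have h1 : x ∈ p₁.support := by rw [hsup₁]; simp
    have h2 : x ∈ p₂.support := by rw [hsup₂]; simp
    rcases hcap x h1 h2 with h | h
    · exact hxa h
    · exact hxbne h
  have hGxy : G.Adj x y :=
    hcl x y (hHle hax) (hHle hxb.symm) (hHle hya.symm) (hHle hby) hxy
  have hxyne2 : s(x, y) ≠ s(a, b) := by
    intro h
    rw [Sym2.eq_iff] at h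
    rcases h with ⟨rfl, rfl⟩ | ⟨rfl, rfl⟩
    · exact hxa rfl
    · exact hxbne rfl
  have hHxy := hHadj x y hGxy hxyne2
  have hmem := hch x y hHxy (hp₁sub x (by rw [hsup₁]; simp)) (hp₂sub y (by rw [hsup₂]; simp))
  have hfin : s(x, y) ∈ c₁.edges := (hedgeiff _).mpr hmem
  rw [hsplit, List.mem_append, hedg₁, hedg₂] at hfin
  simp only [List.mem_cons, List.mem_singleton, List.not_mem_nil, or_false] at hfin
  rcases hfin with (h | h) | (h | h) <;> rw [Sym2.eq_iff] at h
  · rcases h with ⟨rfl, rfl⟩ | ⟨h1, rfl⟩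
    · exact hxa rfl
    · exact hyane rfl
  · rcases h with ⟨h1, rfl⟩ | ⟨rfl, h2⟩
    · exact hyb rfl
    · exact hxbne rfl
  · rcases h with ⟨rfl, h1⟩ | ⟨rfl, rfl⟩
    · exact hxbne rfl
    · exact hxy rfl
  · rcases h with ⟨rfl, rfl⟩ | ⟨rfl, h1⟩
    · exact hxy rfl
    · exact hxa rfl


/-- Key lemma: if `G' ≤ G` are chordal and `G` has an edge not in `G'`, then some
`G`-edge outside `G'` has a clique common neighbourhood (and hence can be deleted). -/
lemma exists_removable [Fintype V] [DecidableEq V] :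
    ∀ (n : ℕ) (G G' : SimpleGraph V), G.edgeSet.ncard = n → IsChordal G → IsChordal G' →
      G' ≤ G → (G.edgeSet \ G'.edgeSet).Nonempty →
      ∃ a b, G.Adj a b ∧ ¬ G'.Adj a b ∧
        ∀ x y, G.Adj a x → G.Adj b x → G.Adj a y → G.Adj b y → x ≠ y → G.Adj x y := by
  intro n
  induction n using Nat.strong_induction_on with
  | _ n ih =>
  intro G G' hn hG hG' hle hFne
  obtain ⟨e₀, he₀⟩ := hFne
  have hc₀d₀ : ∃ c₀ d₀, G.Adj c₀ d₀ ∧ ¬ G'.Adj c₀ d₀ := by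
    induction e₀ with
    | _ c₀ d₀ =>
      exact ⟨c₀, d₀, (SimpleGraph.mem_edgeSet _).mp he₀.1,
        fun h => he₀.2 ((SimpleGraph.mem_edgeSet _).mpr h)⟩
  obtain ⟨c₀, d₀, hcd, hncd⟩ := hc₀d₀
  -- a non-isolated simplicial vertex of G
  set supp : Set V := {z | ∃ w, G.Adj z w} with hsupp
  obtain ⟨v, hvsupp, hvsimp⟩ := (dirac hG supp.ncard supp rfl ⟨c₀, d₀, hcd⟩).1
  have hsimpl : ∀ x y, G.Adj v x → G.Adj v y → x ≠ y → G.Adj x y := by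
    intro x y h1 h2 hne
    exact hvsimp x y ⟨v, h1.symm⟩ ⟨v, h2.symm⟩ h1 h2 hne
  by_cases hcase1 : ∃ bb, G.Adj v bb ∧ ¬ G'.Adj v bb
  · obtain ⟨bb, h1, h2⟩ := hcase1
    exact ⟨v, bb, h1, h2, fun x y hx _ hy _ hne => hsimpl x y hx hy hne⟩
  push_neg at hcase1
  -- case 2: all edges at v are shared
  by_cases hout : ∃ cc dd, G.Adj cc dd ∧ ¬ G'.Adj cc dd ∧ ¬ G.Adj v dd
  · -- recurse on G - v (with G' eliminated at v)
    obtain ⟨cc, dd, hccdd, hnccdd, hnotvdd⟩ := hout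
    have hccv : cc ≠ v := by
      rintro rfl
      exact hnccdd (hcase1 dd hccdd)
    have hddv : dd ≠ v := by
      rintro rfl
      exact hnccdd (hcase1 cc hccdd.symm).symm
    set Gd : SimpleGraph V := restrict G {z | z ≠ v} with hGd
    set Ge : SimpleGraph V := elim G' v with hGe
    have hGdc : IsChordal Gd := isChordal_restrict hG _
    have hGec : IsChordal Ge := isChordal_elim hG' v
    have hle' : Ge ≤ Gd := by
      rintro x y ⟨hxv, hyv, hor | ⟨hxy, hvx, hvy⟩⟩
      · exact ⟨hxv, hyv, hle hor⟩
      · exact ⟨hxv, hyv, hsimpl x y (hle hvx) (hle hvy) hxy⟩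
    obtain ⟨w₀, hw₀⟩ := hvsupp
    have hmeas : Gd.edgeSet.ncard < n := by
      rw [← hn]
      apply Set.ncard_lt_ncard _ (G.edgeSet.toFinite)
      rw [Set.ssubset_def]
      constructor
      · exact SimpleGraph.edgeSet_mono (restrict_le G _)
      · intro hcon
        have h1 : s(v, w₀) ∈ G.edgeSet := (SimpleGraph.mem_edgeSet _).mpr hw₀
        have h2 := hcon h1
        rw [SimpleGraph.mem_edgeSet] at h2
        exact h2.1 rfl
    have hFne' : (Gd.edgeSet \ Ge.edgeSet).Nonempty := by
      refine ⟨s(cc, dd), ?_, ?_⟩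
      · exact (SimpleGraph.mem_edgeSet _).mpr ⟨hccv, hddv, hccdd⟩
      · rw [SimpleGraph.mem_edgeSet]
        rintro ⟨_, _, hor | ⟨_, _, hvdd⟩⟩
        · exact hnccdd hor
        · exact hnotvdd (hle hvdd)
    obtain ⟨a, b, hab, hnab, hclq⟩ := ih _ hmeas Gd Ge rfl hGdc hGec hle' hFne'
    obtain ⟨hav, hbv, habG⟩ := hab
    refine ⟨a, b, habG, ?_, ?_⟩
    · intro h
      exact hnab ⟨hav, hbv, Or.inl h⟩
    · intro x y hax hbx hay hby hxy
      have hxv : x ≠ v := by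
        rintro rfl
        exact hnab ⟨hav, hbv, Or.inr ⟨habG.ne, hcase1 a hax.symm, hcase1 b hbx.symm⟩⟩
      have hyv : y ≠ v := by
        rintro rfl
        exact hnab ⟨hav, hbv, Or.inr ⟨habG.ne, hcase1 a hay.symm, hcase1 b hby.symm⟩⟩
      exact (hclq x y ⟨hav, hxv, hax⟩ ⟨hbv, hxv, hbx⟩ ⟨hav, hyv, hay⟩ ⟨hbv, hyv, hby⟩
        hxy).2.2
  · -- all F-edges lie inside N(v); then (c₀,d₀) is removable
    push_neg at hout
    refine ⟨c₀, d₀, hcd, hncd, ?_⟩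
    by_contra hclq
    push_neg at hclq
    obtain ⟨x, y, hc₀x, hd₀x, hc₀y, hd₀y, hxyne, hnxy⟩ := hclq
    -- find the vertex among x, y outside N[v]
    have hy' : ∃ y', G.Adj c₀ y' ∧ G.Adj d₀ y' ∧ ¬ G.Adj v y' ∧ y' ≠ v := by
      by_cases hxNv : G.Adj v x
      · by_cases hyNv : G.Adj v y
        · exact absurd (hsimpl x y hxNv hyNv hxyne) hnxy
        · refine ⟨y, hc₀y, hd₀y, hyNv, ?_⟩
          rintro rfl
          exact hnxy hxNv.symm
      · by_cases hxv : x = v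
        · subst hxv
          refine ⟨y, hc₀y, hd₀y, fun h => hnxy h, fun h => hxyne h.symm⟩
        · exact ⟨x, hc₀x, hd₀x, hxNv, hxv⟩
    obtain ⟨y', hc₀y', hd₀y', hnvy', hy'v⟩ := hy'
    -- the sides c₀y' and d₀y' must be edges of G'
    have hG'c₀y' : G'.Adj c₀ y' := by
      by_contra h
      exact hnvy' (hout c₀ y' hc₀y' h)
    have hG'd₀y' : G'.Adj d₀ y' := by
      by_contra h
      exact hnvy' (hout d₀ y' hd₀y' h)
    have hG'vc₀ : G'.Adj v c₀ := hcase1 c₀ (by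
      have := hout d₀ c₀ hcd.symm (fun h => hncd h.symm)
      exact this)
    have hG'vd₀ : G'.Adj v d₀ := hcase1 d₀ (hout c₀ d₀ hcd hncd)
    -- distinctness
    have hvc₀ : v ≠ c₀ := hG'vc₀.ne
    have hvd₀ : v ≠ d₀ := hG'vd₀.ne
    have hc₀d₀ : c₀ ≠ d₀ := hcd.ne
    have hc₀y'ne : c₀ ≠ y' := hc₀y'.ne
    have hd₀y'ne : d₀ ≠ y' := hd₀y'.ne
    have hvy'ne : v ≠ y' := fun h => hy'v h.symm
    -- the 4-cycle v c₀ y' d₀ in G'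
    set W : G'.Walk v v := Walk.cons hG'vc₀ (Walk.cons hG'c₀y'
      (Walk.cons hG'd₀y'.symm (Walk.cons hG'vd₀.symm Walk.nil))) with hW
    have hWsup : ∀ z, z ∈ W.support ↔ (z = v ∨ z = c₀ ∨ z = y' ∨ z = d₀) := by
      intro z
      rw [hW]
      simp only [Walk.support_cons, Walk.support_nil, List.mem_cons, List.mem_singleton]
      tauto
    have hWcyc : W.IsCycle := by
      rw [hW, Walk.cons_isCycle_iff]
      constructor
      · rw [Walk.isPath_def]
        simp only [Walk.support_cons, Walk.support_nil]
        refine List.nodup_cons.mpr ⟨?_, List.nodup_cons.mpr ⟨?_, List.nodup_cons.mpr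
          ⟨?_, List.nodup_singleton _⟩⟩⟩
        · simp only [List.mem_cons, List.mem_singleton]
          rintro (rfl | rfl | h)
          · exact hc₀y'ne rfl
          · exact hc₀d₀ rfl
          · simp at h
            exact hvc₀ h.symm
        · simp only [List.mem_cons, List.mem_singleton]
          rintro (rfl | h)
          · exact hd₀y'ne rfl
          · simp at h
            exact hvy'ne h.symm
        · simp only [List.mem_singleton]
          intro h
          exact hvd₀ h.symm
      · simp only [Walk.edges_cons, Walk.edges_nil, List.mem_cons, List.not_mem_nil,
          or_false, List.mem_singleton]
        rintro (h | h | h) <;> rw [Sym2.eq_iff] at h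
        · rcases h with ⟨h1, _⟩ | ⟨h1, _⟩
          · exact hvc₀ h1
          · exact hvy'ne h1
        · rcases h with ⟨h1, _⟩ | ⟨h1, _⟩
          · exact hvy'ne h1
          · exact hvd₀ h1
        · rcases h with ⟨h1, _⟩ | ⟨_, h2⟩
          · exact hvd₀ h1
          · exact hc₀d₀ h2
    have hWlen : 4 ≤ W.length := by
      rw [hW]
      simp
    obtain ⟨p, q, hpq, hp, hq, hnpq⟩ := hG' W hWcyc hWlen
    have hWedges : ∀ z₁ z₂, s(z₁, z₂) ∈ W.edges ↔
        (s(z₁, z₂) = s(v, c₀) ∨ s(z₁, z₂) = s(c₀, y') ∨ s(z₁, z₂) = s(y', d₀) ∨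
          s(z₁, z₂) = s(d₀, v)) := by
      intro z₁ z₂
      rw [hW]
      simp only [Walk.edges_cons, Walk.edges_nil, List.mem_cons, List.mem_singleton]
      tauto
    rw [hWsup] at hp hq
    have hside : ∀ z₁ z₂, G'.Adj z₁ z₂ → s(z₁, z₂) ∉ W.edges →
        (z₁ = v ∨ z₁ = c₀ ∨ z₁ = y' ∨ z₁ = d₀) →
        (z₂ = v ∨ z₂ = c₀ ∨ z₂ = y' ∨ z₂ = d₀) → False := by
      intro z₁ z₂ hadj hnmem h1 h2
      rcases h1 with rfl | rfl | rfl | rfl <;> rcases h2 with rfl | rfl | rfl | rfl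
      · exact hadj.ne rfl
      · exact hnmem ((hWedges _ _).mpr (Or.inl rfl))
      · exact hnvy' (hle hadj)
      · exact hnmem ((hWedges _ _).mpr (Or.inr (Or.inr (Or.inr (Sym2.eq_swap)))))
      · exact hnmem ((hWedges _ _).mpr (Or.inl Sym2.eq_swap))
      · exact hadj.ne rfl
      · exact hnmem ((hWedges _ _).mpr (Or.inr (Or.inl rfl)))
      · exact hncd hadj
      · exact hnvy' (hle hadj.symm)
      · exact hnmem ((hWedges _ _).mpr (Or.inr (Or.inl Sym2.eq_swap)))
      · exact hadj.ne rfl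
      · exact hnmem ((hWedges _ _).mpr (Or.inr (Or.inr (Or.inl rfl))))
      · exact hnmem ((hWedges _ _).mpr (Or.inr (Or.inr (Or.inr rfl))))
      · exact hncd hadj.symm
      · exact hnmem ((hWedges _ _).mpr (Or.inr (Or.inr (Or.inl Sym2.eq_swap))))
      · exact hadj.ne rfl
    exact hside p q hpq hnpq hp hq

end ChordalAux

theorem chordal_chain_rule {V : Type*} [Fintype V] (G G' : SimpleGraph V)
    (hG : IsChordal G) (hG' : IsChordal G') (hle : G' ≤ G) (k : ℕ)
    (hk : (G.edgeSet \ G'.edgeSet).ncard = k) :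
    ∃ f : Fin (k + 1) → SimpleGraph V,
      f 0 = G' ∧ f (Fin.last k) = G ∧ (∀ i, IsChordal (f i)) ∧
      ∀ i : Fin k, f i.castSucc ≤ f i.succ ∧
        ∃ e ∉ (f i.castSucc).edgeSet,
          (f i.succ).edgeSet = insert e (f i.castSucc).edgeSet := by
  classical
  induction k generalizing G with
  | zero =>
    have hG'G : G' = G := by
      have h0 : G.edgeSet \ G'.edgeSet = ∅ := by
        rwa [Set.ncard_eq_zero (Set.toFinite _)] at hk
      apply le_antisymm hle
      intro x y hxy
      by_contra hn
      have hmem : s(x, y) ∈ G.edgeSet \ G'.edgeSet :=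
        ⟨(SimpleGraph.mem_edgeSet _).mpr hxy, fun h => hn ((SimpleGraph.mem_edgeSet _).mp h)⟩
      rw [h0] at hmem
      exact hmem
    exact ⟨fun _ => G', rfl, by rw [hG'G], fun _ => hG', fun i => i.elim0⟩
  | succ k ihk =>
    have hFne : (G.edgeSet \ G'.edgeSet).Nonempty := by
      apply Set.nonempty_of_ncard_ne_zero
      omega
    obtain ⟨a, b, hab, hnab, hclq⟩ :=
      ChordalAux.exists_removable (G.edgeSet.ncard) G G' rfl hG hG' hle hFne
    set G₁ := G.deleteEdges {s(a, b)} with hG₁def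
    have hG₁ : IsChordal G₁ := ChordalAux.isChordal_deleteEdge hG hab hclq
    have hleG₁ : G' ≤ G₁ := by
      intro x y hxy
      rw [hG₁def, SimpleGraph.deleteEdges_adj]
      refine ⟨hle hxy, ?_⟩
      simp only [Set.mem_singleton_iff]
      intro h
      rw [Sym2.eq_iff] at h
      rcases h with ⟨rfl, rfl⟩ | ⟨rfl, rfl⟩
      · exact hnab hxy
      · exact hnab hxy.symm
    have hE₁ : G₁.edgeSet = G.edgeSet \ {s(a, b)} := SimpleGraph.edgeSet_deleteEdges _
    have habmem : s(a, b) ∈ G.edgeSet \ G'.edgeSet :=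
      ⟨(SimpleGraph.mem_edgeSet _).mpr hab,
        fun h => hnab ((SimpleGraph.mem_edgeSet _).mp h)⟩
    have hk₁ : (G₁.edgeSet \ G'.edgeSet).ncard = k := by
      have hseteq : G₁.edgeSet \ G'.edgeSet = (G.edgeSet \ G'.edgeSet) \ {s(a, b)} := by
        rw [hE₁]
        ext e
        simp only [Set.mem_diff, Set.mem_singleton_iff]
        tauto
      rw [hseteq]
      have := Set.ncard_diff_singleton_add_one habmem (Set.toFinite _)
      omega
    obtain ⟨f, hf0, hflast, hfchordal, hfstep⟩ := ihk G₁ hG₁ hleG₁ hk₁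
    refine ⟨Fin.snoc f G, ?_, ?_, ?_, ?_⟩
    · rw [← Fin.castSucc_zero, Fin.snoc_castSucc]
      exact hf0
    · rw [Fin.snoc_last]
    · intro i
      rcases Fin.eq_castSucc_or_eq_last i with ⟨j, rfl⟩ | rfl
      · rw [Fin.snoc_castSucc]
        exact hfchordal j
      · rw [Fin.snoc_last]
        exact hG
    · intro i
      rcases Fin.eq_castSucc_or_eq_last i with ⟨j, rfl⟩ | rfl
      · have h1 : (j.castSucc).castSucc = (j.castSucc : Fin (k+1)).castSucc := rfl
        have h2 : (j.castSucc).succ = (j.succ).castSucc := (Fin.succ_castSucc j).symm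
        rw [h2, Fin.snoc_castSucc, Fin.snoc_castSucc]
        exact hfstep j
      · have h2 : (Fin.last k).succ = Fin.last (k + 1) := Fin.succ_last k
        rw [h2, Fin.snoc_castSucc, Fin.snoc_last, hflast]
        constructor
        · exact SimpleGraph.deleteEdges_le _
        · refine ⟨s(a, b), ?_, ?_⟩
          · rw [hE₁]
            intro hmem
            exact hmem.2 rfl
          · rw [hE₁, Set.insert_diff_singleton, Set.insert_eq_of_mem habmem.1]
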